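/- Let e ≥ 2 and let λ = (l₁^{k₁}, l₂^{k₂}, …, l_s^{k_s}) be an e-restricted partition (part l_i repeated k_i ≥ 1 times) with l₁ = e and l₁ > l₂ > ⋯ > l_s ≥ 1. Then there are exactly k₁ indices m with |λ ∩ L_m| = 2, and |λ ∩ L_m| ≤ 1 for all other m. -/

import Mathlib

namespace KN

/-- A subset of `ℤ²_{≥1}` (encoded in `ℕ × ℕ`) shaped like a Young diagram:
all coordinates are `≥ 1` and the set is closed under decreasing either coordinate
(staying `≥ 1`). -/
def IsDiagram (S : Set (ℕ × ℕ)) : Prop :=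
  (∀ p ∈ S, 1 ≤ p.1 ∧ 1 ≤ p.2) ∧
  ∀ a b a' b', (a, b) ∈ S → 1 ≤ a' → a' ≤ a → 1 ≤ b' → b' ≤ b → (a', b') ∈ S

/-- The Young diagram of a partition given as a function `l : ℕ → ℕ`
(`l r` is the `r`-th part, for `r ≥ 1`): the nodes `(a, b)` with `a, b ≥ 1`, `b ≤ l a`. -/
def cells (l : ℕ → ℕ) : Set (ℕ × ℕ) := {p | 1 ≤ p.1 ∧ 1 ≤ p.2 ∧ p.2 ≤ l p.1}

/-- `l` (indexed from `1`) is a weakly decreasing sequence of naturals, eventually zero. -/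
def IsPartitionFun (l : ℕ → ℕ) : Prop :=
  (∀ r, 1 ≤ r → l (r + 1) ≤ l r) ∧ ∃ N, ∀ r, N ≤ r → l r = 0

/-- `l` is a partition of `d`: its Young diagram has exactly `d` nodes. -/
def IsPartitionOf (l : ℕ → ℕ) (d : ℕ) : Prop :=
  IsPartitionFun l ∧ (cells l).Finite ∧ (cells l).ncard = d

/-- `λ_r - λ_{r+1} < e` for all `r ≥ 1`. -/
def IsRestricted (e : ℕ) (l : ℕ → ℕ) : Prop := ∀ r, 1 ≤ r → l r < l (r + 1) + e

/-- The `m`-th ladder `L_m = {(1 + k, m - k(e-1)) : k ≥ 0, k(e-1) < m}`. -/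
def ladder (e m : ℕ) : Set (ℕ × ℕ) :=
  {p | ∃ k : ℕ, k * (e - 1) < m ∧ p = (1 + k, m - k * (e - 1))}

/-- The residue `b - a (mod e)` of a node `(a, b)`. -/
def res (e : ℕ) (p : ℕ × ℕ) : ZMod e := (p.2 : ZMod e) - (p.1 : ZMod e)

/-- `A` is a removable node of the diagram `S`. -/
def Removable (S : Set (ℕ × ℕ)) (A : ℕ × ℕ) : Prop := A ∈ S ∧ IsDiagram (S \ {A})

/-- `B` is an addable node of the diagram `S`. -/
def Addable (S : Set (ℕ × ℕ)) (B : ℕ × ℕ) : Prop := B ∉ S ∧ IsDiagram (S ∪ {B})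

/-- `σ_k` of a diagram: the number of nodes in rows `1, …, k`. -/
noncomputable def sigmaSet (S : Set (ℕ × ℕ)) (k : ℕ) : ℕ := (S ∩ {p | p.1 ≤ k}).ncard

/-- Dominance order on diagrams: `S ⊴ T` iff `σ_k(S) ≤ σ_k(T)` for all `k`. -/
def DomLE (S T : Set (ℕ × ℕ)) : Prop := ∀ k, sigmaSet S k ≤ sigmaSet T k

/-- `R_m = r_1(λ) + ⋯ + r_m(λ)` where `r_u(λ) = |λ ∩ L_u|`. -/
noncomputable def Rlad (e : ℕ) (l : ℕ → ℕ) (m : ℕ) : ℕ :=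
  ∑ u ∈ Finset.Icc 1 m, (cells l ∩ ladder e u).ncard

/-- The `s`-th entry of the ladder weight `j^λ`: it equals `m - 1 (mod e)` for the
unique `m` with `R_{m-1} < s ≤ R_m`. -/
noncomputable def ladderWeight (e : ℕ) (l : ℕ → ℕ) (s : ℕ) : ZMod e :=
  ((sInf {m : ℕ | s ≤ Rlad e l m} - 1 : ℕ) : ZMod e)

/-- A standard tableau of shape `S` (with `|S| = d`): a bijective labelling of the
nodes of `S` by `1, …, d`, increasing along rows and columns. -/
def IsStandardTableau (S : Set (ℕ × ℕ)) (d : ℕ) (T : ℕ × ℕ → ℕ) : Prop :=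
  (∀ p ∈ S, 1 ≤ T p ∧ T p ≤ d) ∧
  (∀ p ∈ S, ∀ q ∈ S, T p = T q → p = q) ∧
  (∀ s, 1 ≤ s → s ≤ d → ∃ p ∈ S, T p = s) ∧
  (∀ a b, (a, b) ∈ S → (a, b + 1) ∈ S → T (a, b) < T (a, b + 1)) ∧
  (∀ a b, (a, b) ∈ S → (a + 1, b) ∈ S → T (a, b) < T (a + 1, b))

/-- The degree `d_A(S)` of a removable node `A` of `S`:
(number of addable nodes of `S` of the same residue strictly below `A`) minus
(number of removable nodes of `S` of the same residue strictly below `A`). -/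
noncomputable def degNode (e : ℕ) (S : Set (ℕ × ℕ)) (A : ℕ × ℕ) : ℤ :=
  (({B | Addable S B ∧ res e B = res e A ∧ A.1 < B.1}).ncard : ℤ) -
  (({B | Removable S B ∧ res e B = res e A ∧ A.1 < B.1}).ncard : ℤ)

/-- The degree of a standard tableau: `deg(T) = Σ_{s=1}^d d_{A_s}(sh(T_{≤ s}))`,
written as a sum over the nodes `p` of `S` (with `s = T p`). -/
noncomputable def degTab (e : ℕ) (S : Set (ℕ × ℕ)) (T : ℕ × ℕ → ℕ) : ℤ :=
  ∑ᶠ p ∈ S, degNode e {q | q ∈ S ∧ T q ≤ T p} p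

/-- The set of standard tableaux of shape `S` (of size `d`) whose residue sequence
equals the ladder weight `j^λ` of the partition `l`; tableaux are normalized to
take the value `0` off `S`. -/
def LWTableaux (e d : ℕ) (l : ℕ → ℕ) (S : Set (ℕ × ℕ)) : Set ((ℕ × ℕ) → ℕ) :=
  {T | IsStandardTableau S d T ∧ (∀ p, p ∉ S → T p = 0) ∧
    ∀ p ∈ S, res e p = ladderWeight e l (T p)}

/-- The quantum integer `[n]_q = q^{n-1} + q^{n-3} + ⋯ + q^{1-n} ∈ ℤ[q, q⁻¹]`. -/
noncomputable def qint (n : ℕ) : LaurentPolynomial ℤ :=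
  ∑ k ∈ Finset.range n, LaurentPolynomial.T ((n : ℤ) - 1 - 2 * k)

/-- The quantum factorial `[n]_q! = [n]_q [n-1]_q ⋯ [1]_q`. -/
noncomputable def qfact (n : ℕ) : LaurentPolynomial ℤ :=
  ∏ k ∈ Finset.Icc 1 n, qint k

private lemma mem_inter_ladder_iff {e : ℕ} {l : ℕ → ℕ} {u : ℕ} {p : ℕ × ℕ} :
    p ∈ cells l ∩ ladder e u ↔
      ∃ k, k * (e - 1) < u ∧ u ≤ k * (e - 1) + l (1 + k) ∧
        p = (1 + k, u - k * (e - 1)) := by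
  constructor
  · rintro ⟨hc, ⟨k, hk, rfl⟩⟩
    obtain ⟨-, h2, h3⟩ := hc
    have h3' : u - k * (e - 1) ≤ l (1 + k) := h3
    exact ⟨k, hk, by omega, rfl⟩
  · rintro ⟨k, hk, hu, rfl⟩
    refine ⟨⟨Nat.le_add_right 1 k, ?_, ?_⟩, ⟨k, hk, rfl⟩⟩
    · show 1 ≤ u - k * (e - 1); omega
    · show u - k * (e - 1) ≤ l (1 + k); omega

/-- for `λ = (l₁^{k₁}, …, l_s^{k_s})` `e`-restricted with `l₁ = e` and
strictly decreasing part sizes, exactly `k₁` ladders meet `λ` in two nodes and all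
other ladders meet `λ` in at most one node. -/
theorem ladder_sizes_hook_case
    (e s : ℕ) (he : 2 ≤ e) (hs : 1 ≤ s)
    (l : ℕ → ℕ) (L K : ℕ → ℕ)
    (hl : IsPartitionFun l) (hrestr : IsRestricted e l)
    (hL1 : L 1 = e)
    (hLdec : ∀ i, 1 ≤ i → i < s → L (i + 1) < L i)
    (hLpos : ∀ i, 1 ≤ i → i ≤ s → 1 ≤ L i)
    (hKpos : ∀ i, 1 ≤ i → i ≤ s → 1 ≤ K i)
    (hparts : ∀ i, 1 ≤ i → i ≤ s → ∀ rr, (∑ j ∈ Finset.Icc 1 (i - 1), K j) < rr →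
      rr ≤ ∑ j ∈ Finset.Icc 1 i, K j → l rr = L i)
    (hzero : ∀ rr, (∑ j ∈ Finset.Icc 1 s, K j) < rr → l rr = 0) :
    {u : ℕ | 1 ≤ u ∧ (cells l ∩ ladder e u).ncard = 2}.ncard = K 1 ∧
      ∀ u, 1 ≤ u → (cells l ∩ ladder e u).ncard ≠ 2 →
        (cells l ∩ ladder e u).ncard ≤ 1 := by
  -- basic facts about `l`
  have hK1 : 1 ≤ K 1 := hKpos 1 le_rfl hs
  have hl1k : ∀ r, 1 ≤ r → r ≤ K 1 → l r = e := by
    intro r h1 h2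
    have h := hparts 1 le_rfl hs r (by simp; omega) (by simpa using h2)
    rwa [hL1] at h
  have anti : ∀ r r', 1 ≤ r → r ≤ r' → l r' ≤ l r := by
    intro r r' hr h
    induction r', h using Nat.le_induction with
    | base => exact le_rfl
    | succ n hn ih => exact le_trans (hl.1 n (le_trans hr hn)) ih
  have hle : ∀ r, 1 ≤ r → l r ≤ e := by
    intro r hr
    have h := anti 1 r le_rfl hr
    rwa [hl1k 1 le_rfl hK1] at h
  have hlt : ∀ r, K 1 < r → l r < e := by
    intro r hr
    rcases Nat.lt_or_ge s 2 with hs2 | hs2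
    · have hss : s = 1 := by omega
      have h0 : l r = 0 := hzero r (by rw [hss]; simpa using hr)
      omega
    · have hK2 : 1 ≤ K 2 := hKpos 2 (by omega) hs2
      have hsum2 : ∑ j ∈ Finset.Icc 1 2, K j = K 1 + K 2 := by
        rw [show Finset.Icc 1 2 = {1, 2} by decide]
        rw [Finset.sum_pair (by norm_num)]
      have hval : l (K 1 + 1) = L 2 :=
        hparts 2 (by omega) hs2 (K 1 + 1) (by simp) (by rw [hsum2]; omega)
      have hL2 : L 2 < e := by
        have h := hLdec 1 le_rfl (by omega)
        rwa [hL1] at h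
      have h := anti (K 1 + 1) r (by omega) (by omega)
      omega
  have hnext : ∀ r, 1 ≤ r → l r = e → 1 ≤ l (r + 1) := by
    intro r hr hre
    have h := hrestr r hr
    omega
  have hmul : ∀ k : ℕ, (k + 1) * (e - 1) = k * (e - 1) + (e - 1) := by
    intro k; rw [add_mul, one_mul]
  -- Lemma A: the ladders meeting λ twice
  have lemA : ∀ k, k < K 1 →
      cells l ∩ ladder e ((k + 1) * (e - 1) + 1) = {(k + 1, e), (k + 2, 1)} := by
    intro k hk
    ext p
    rw [mem_inter_ladder_iff]
    constructor
    · rintro ⟨j, hj1, hj2, rfl⟩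
      have hle' : l (1 + j) ≤ e := hle _ (by omega)
      have h1 : k ≤ j := by
        have h2 : (k + 1) * (e - 1) ≤ (j + 1) * (e - 1) := by
          have hmj := hmul j; omega
        have := Nat.le_of_mul_le_mul_right h2 (show 0 < e - 1 by omega)
        omega
      have h2 : j ≤ k + 1 := by
        by_contra h
        push_neg at h
        have hmono : (k + 1 + 1) * (e - 1) ≤ j * (e - 1) :=
          mul_le_mul_left (by omega) _
        have h3 := hmul (k + 1); have h4 := hmul k
        omega
      have hjk : j = k ∨ j = k + 1 := by omega
      rcases hjk with rfl | rfl
      · have hm := hmul j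
        have e1 : (1 + j : ℕ) = j + 1 := by omega
        have e2 : (j + 1) * (e - 1) + 1 - j * (e - 1) = e := by omega
        simp [e1, e2]
      · have e2 : (k + 1) * (e - 1) + 1 - (k + 1) * (e - 1) = 1 := by omega
        have e1 : (1 + (k + 1) : ℕ) = k + 2 := by omega
        simp [e1, e2]
    · intro hp
      simp only [Set.mem_insert_iff, Set.mem_singleton_iff] at hp
      have hm := hmul k
      rcases hp with rfl | rfl
      · refine ⟨k, by omega, ?_, ?_⟩
        · have hlk : l (1 + k) = e := hl1k (1 + k) (by omega) (by omega)
          omega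
        · rw [Prod.mk.injEq]; omega
      · refine ⟨k + 1, by omega, ?_, ?_⟩
        · have hlk : l (k + 1) = e := hl1k (k + 1) (by omega) hk
          have h2 : 1 ≤ l (k + 1 + 1) := hnext (k + 1) (by omega) hlk
          rw [show (1 + (k + 1) : ℕ) = k + 1 + 1 by omega]
          omega
        · rw [Prod.mk.injEq]; omega
  have cardA : ∀ k, k < K 1 →
      (cells l ∩ ladder e ((k + 1) * (e - 1) + 1)).ncard = 2 := by
    intro k hk
    rw [lemA k hk]
    refine Set.ncard_pair ?_
    intro h
    rw [Prod.mk.injEq] at h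
    omega
  -- Lemma B: all other ladders meet λ at most once
  have lemB : ∀ u, (¬ ∃ k, k < K 1 ∧ u = (k + 1) * (e - 1) + 1) →
      (cells l ∩ ladder e u).ncard ≤ 1 := by
    intro u hu
    have hsub : (cells l ∩ ladder e u).Subsingleton := by
      intro p hp q hq
      rw [mem_inter_ladder_iff] at hp hq
      obtain ⟨j, hj1, hj2, rfl⟩ := hp
      obtain ⟨j', hj1', hj2', rfl⟩ := hq
      suffices h : j = j' by rw [h]
      by_contra hne
      have key : ∀ a b : ℕ, a < b → a * (e - 1) < u → u ≤ a * (e - 1) + l (1 + a) →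
          b * (e - 1) < u → u ≤ b * (e - 1) + l (1 + b) → False := by
        intro a b hab ha1 ha2 hb1 hb2
        have hlea : l (1 + a) ≤ e := hle _ (by omega)
        rcases Nat.lt_or_ge (a + 1) b with h2 | h2
        · have hmono : (a + 1 + 1) * (e - 1) ≤ b * (e - 1) :=
            mul_le_mul_left (by omega) _
          have h3 := hmul (a + 1); have h4 := hmul a
          omega
        · have hb : b = a + 1 := by omega
          subst hb
          have h4 := hmul a
          have hla : l (1 + a) = e := by omega
          have hke : a < K 1 := by
            by_contra hc
            have := hlt (1 + a) (by omega)
            omega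
          exact hu ⟨a, hke, by omega⟩
      rcases Nat.lt_or_ge j j' with h | h
      · exact key j j' h hj1 hj2 hj1' hj2'
      · exact key j' j (by omega) hj1' hj2' hj1 hj2
    rcases hsub.eq_empty_or_singleton with h | ⟨a, h⟩ <;> simp [h]
  have hinj : Function.Injective (fun k : ℕ => (k + 1) * (e - 1) + 1) := by
    intro a b h
    simp only at h
    have := Nat.eq_of_mul_eq_mul_right (show 0 < e - 1 by omega)
      (show (a + 1) * (e - 1) = (b + 1) * (e - 1) by omega)
    omega
  constructor
  · have hseteq : {u : ℕ | 1 ≤ u ∧ (cells l ∩ ladder e u).ncard = 2} =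
        (fun k : ℕ => (k + 1) * (e - 1) + 1) '' Set.Iio (K 1) := by
      ext u
      simp only [Set.mem_setOf_eq, Set.mem_image, Set.mem_Iio]
      constructor
      · rintro ⟨hu1, hu2⟩
        by_contra hc
        push_neg at hc
        have hnex : ¬ ∃ k, k < K 1 ∧ u = (k + 1) * (e - 1) + 1 := by
          rintro ⟨k, hk, hke⟩
          exact hc k hk hke.symm
        have := lemB u hnex
        omega
      · rintro ⟨k, hk, rfl⟩
        exact ⟨by omega, cardA k hk⟩
    rw [hseteq, Set.ncard_image_of_injective _ hinj,
      show Set.Iio (K 1) = (↑(Finset.range (K 1)) : Set ℕ) from (Finset.coe_range _).symm,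
      Set.ncard_coe_finset, Finset.card_range]
  · intro u hu hne
    by_cases hc : ∃ k, k < K 1 ∧ u = (k + 1) * (e - 1) + 1
    · obtain ⟨k, hk, rfl⟩ := hc
      exact absurd (cardA k hk) hne
    · exact lemB u hc

end KN
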